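/- Let m ≥ 3 be an integer and set n = 2m. Then the limit as a → +∞ of ∫_0^a [ (2n² − 9n + 2)σ⁴ − 2(3n + 2)σ² − (3n + 2) ] · σ^{n−1}/(σ² + 1)^n dσ exists and equals c(n) = (m² − 2m − 1)·((m−1)!)² / ((m−1)(m−2)(2m−3)!), and moreover c(n) > 0. -/

import Mathlib

open MeasureTheory Filter Set Topology

lemma base_case (q : ℕ) (hq : 2 ≤ q) :
    IntegrableOn (fun x : ℝ => x ^ (2*0+1) / (x^2+1)^q) (Ioi (0:ℝ)) ∧
    ∫ x in Ioi (0:ℝ), x ^ (2*0+1) / (x^2+1)^q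
      = ((Nat.factorial 0 : ℝ) * (Nat.factorial (q-0-2))) / (2 * Nat.factorial (q-1)) := by
  set g : ℝ → ℝ := fun x => -(2*((q:ℝ)-1))⁻¹ * ((x^2+1)^(q-1))⁻¹ with hg
  have hne : ∀ x : ℝ, (x^2+1) ≠ 0 := fun x => by positivity
  have hderiv : ∀ x ∈ Ici (0:ℝ), HasDerivAt g (x ^ (2*0+1) / (x^2+1)^q) x := by
    intro x _
    have h1 : HasDerivAt (fun x : ℝ => (x^2+1)^(q-1))
        (((q:ℝ)-1) * (x^2+1)^(q-2) * (2*x)) x := by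
      have := ((hasDerivAt_pow 2 x).add_const 1).fun_pow (q-1)
      refine this.congr_deriv ?_
      have : q - 1 - 1 = q - 2 := by omega
      push_cast [this, Nat.cast_sub (by omega : 1 ≤ q)]
      ring
    have h2 := (h1.inv (by positivity)).const_mul (-(2*((q:ℝ)-1))⁻¹)
    refine h2.congr_deriv (Eq.symm ?_)
    have hq1 : (x^2+1)^(q-1) ≠ 0 := by positivity
    have hqc : ((q:ℝ) - 1) ≠ 0 := by
      have : (2:ℝ) ≤ q := by exact_mod_cast hq
      linarith
    have hpq : (x^2+1)^q = (x^2+1)^(q-2) * (x^2+1)^2 := by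
      rw [← pow_add]; congr 1; omega
    have hpq1 : ((x^2+1)^(q-1))^2 = (x^2+1)^(q-2) * (x^2+1)^q := by
      rw [← pow_mul, ← pow_add]; congr 1; omega
    field_simp
    rw [hpq1]
    ring
  have hpos : ∀ x ∈ Ioi (0:ℝ), 0 ≤ x ^ (2*0+1) / (x^2+1)^q := by
    intro x hx
    have : (0:ℝ) < x := hx
    positivity
  have htends : Tendsto g atTop (𝓝 0) := by
    have h1 : Tendsto (fun x : ℝ => (x^2+1)^(q-1)) atTop atTop := by
      exact (tendsto_pow_atTop (by omega : q - 1 ≠ 0)).comp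
        (tendsto_atTop_add_const_right _ 1 (tendsto_pow_atTop two_ne_zero))
    have h2 := h1.inv_tendsto_atTop
    have := h2.const_mul (-(2*((q:ℝ)-1))⁻¹)
    simp only [hg]
    convert this using 2 with x
    all_goals simp
  have hint := integrableOn_Ioi_deriv_of_nonneg' hderiv hpos htends
  refine ⟨hint, ?_⟩
  rw [integral_Ioi_of_hasDerivAt_of_nonneg' hderiv hpos htends]
  have hqc : ((q:ℝ) - 1) ≠ 0 := by
    have : (2:ℝ) ≤ q := by exact_mod_cast hq
    linarith
  have hfq : (Nat.factorial (q-1) : ℝ) = ((q:ℝ)-1) * Nat.factorial (q-2) := by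
    have h : q - 1 = (q-2) + 1 := by omega
    rw [h, Nat.factorial_succ]
    push_cast [Nat.cast_sub (by omega : 2 ≤ q)]
    ring
  simp only [hg, Nat.sub_zero, Nat.factorial_zero]
  rw [hfq]
  have : ((0:ℝ)^2+1)^(q-1) = 1 := by norm_num
  rw [this]
  have hf2 : (Nat.factorial (q-2) : ℝ) ≠ 0 := by positivity
  field_simp
  ring

lemma key_lemma : ∀ p q : ℕ, p + 2 ≤ q →
    IntegrableOn (fun x : ℝ => x ^ (2*p+1) / (x^2+1)^q) (Ioi (0:ℝ)) ∧
    ∫ x in Ioi (0:ℝ), x ^ (2*p+1) / (x^2+1)^q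
      = ((Nat.factorial p : ℝ) * (Nat.factorial (q-p-2))) / (2 * Nat.factorial (q-1)) := by
  intro p
  induction p with
  | zero => exact fun q hq => base_case q hq
  | succ p IH =>
    intro q hq
    obtain ⟨r, rfl⟩ : ∃ r, q = p + 3 + r := ⟨q - (p+3), by omega⟩
    have IH1 := IH (p + 2 + r) (by omega)
    have IH2 := IH (p + 3 + r) (by omega)
    have heq : (fun x : ℝ => x ^ (2*(p+1)+1) / (x^2+1)^(p+3+r))
        = fun x : ℝ => x ^ (2*p+1) / (x^2+1)^(p+2+r) - x ^ (2*p+1) / (x^2+1)^(p+3+r) := by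
      funext x
      have h1 : (x:ℝ)^2+1 ≠ 0 := by positivity
      have h2 : (x^2+1)^(p+3+r) = (x^2+1)^(p+2+r) * (x^2+1) := by
        rw [← pow_succ]; congr 1; omega
      have h3 : x ^ (2*(p+1)+1) = x ^ (2*p+1) * x^2 := by
        rw [← pow_add]; congr 1
      rw [h2, h3]
      field_simp
      ring
    have hs1 : p + 2 + r - 1 = p + 1 + r := by omega
    have hs2 : p + 2 + r - p - 2 = r := by omega
    have hs3 : p + 3 + r - 1 = p + 2 + r := by omega
    have hs4 : p + 3 + r - p - 2 = r + 1 := by omega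
    have hs5 : p + 3 + r - (p+1) - 2 = r := by omega
    rw [hs1, hs2] at IH1
    rw [hs3, hs4] at IH2
    constructor
    · rw [heq]; exact IH1.1.sub IH2.1
    · rw [heq, integral_sub IH1.1 IH2.1, IH1.2, IH2.2, hs3, hs5]
      have e1 : Nat.factorial (p+2+r) = (p+2+r) * Nat.factorial (p+1+r) := by
        rw [show p+2+r = (p+1+r)+1 by omega, Nat.factorial_succ]
      have e2 : Nat.factorial (r+1) = (r+1) * Nat.factorial r := Nat.factorial_succ r
      have e3 : Nat.factorial (p+1) = (p+1) * Nat.factorial p := Nat.factorial_succ p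
      have hf1 : (Nat.factorial (p+1+r) : ℝ) ≠ 0 := by positivity
      have hf2 : (Nat.factorial r : ℝ) ≠ 0 := by positivity
      rw [e1, e2, e3]
      push_cast
      field_simp
      ring

/-- The improper integral
`∫_0^∞ [(2n²−9n+2)σ⁴ − 2(3n+2)σ² − (3n+2)] σ^(n−1)/(σ²+1)^n dσ`
converges to `c(n) = (m²−2m−1)((m−1)!)² / ((m−1)(m−2)(2m−3)!) > 0` for `n = 2m ≥ 6`. -/
theorem bubble_constant_integral_tendsto
    (m : ℕ) (hm : 3 ≤ m) (n : ℕ) (hn : n = 2 * m) :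
    Tendsto
      (fun a : ℝ => ∫ σ in Set.Ioo (0 : ℝ) a,
        ((2 * (n : ℝ) ^ 2 - 9 * (n : ℝ) + 2) * σ ^ 4
            - 2 * (3 * (n : ℝ) + 2) * σ ^ 2 - (3 * (n : ℝ) + 2))
          * σ ^ (n - 1) / (σ ^ 2 + 1) ^ n)
      atTop
      (nhds (((m : ℝ) ^ 2 - 2 * (m : ℝ) - 1) * ((m - 1).factorial : ℝ) ^ 2 /
        (((m : ℝ) - 1) * ((m : ℝ) - 2) * ((2 * m - 3).factorial : ℝ))))
    ∧ 0 < ((m : ℝ) ^ 2 - 2 * (m : ℝ) - 1) * ((m - 1).factorial : ℝ) ^ 2 /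
        (((m : ℝ) - 1) * ((m : ℝ) - 2) * ((2 * m - 3).factorial : ℝ)) := by
  subst hn
  obtain ⟨s, rfl⟩ : ∃ s, m = s + 3 := ⟨m - 3, by omega⟩
  set N : ℕ := 2 * (s + 3) with hN
  set c2 : ℝ := 2 * (N : ℝ) ^ 2 - 9 * (N : ℝ) + 2 with hc2
  set c1 : ℝ := 2 * (3 * (N : ℝ) + 2) with hc1
  set c0 : ℝ := 3 * (N : ℝ) + 2 with hc0
  have K2 := key_lemma (s + 4) N (by omega)
  have K1 := key_lemma (s + 3) N (by omega)
  have K0 := key_lemma (s + 2) N (by omega)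
  have heq : (fun σ : ℝ =>
        (c2 * σ ^ 4 - c1 * σ ^ 2 - c0) * σ ^ (N - 1) / (σ ^ 2 + 1) ^ N)
      = fun σ : ℝ => c2 * (σ ^ (2*(s+4)+1) / (σ^2+1)^N)
          - c1 * (σ ^ (2*(s+3)+1) / (σ^2+1)^N)
          - c0 * (σ ^ (2*(s+2)+1) / (σ^2+1)^N) := by
    funext σ
    have h1 : (σ:ℝ)^2 + 1 ≠ 0 := by positivity
    have hE : N - 1 = 2*s+5 := by omega
    have hE2 : 2*(s+4)+1 = (2*s+5)+4 := by omega
    have hE3 : 2*(s+3)+1 = (2*s+5)+2 := by omega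
    have hE4 : 2*(s+2)+1 = 2*s+5 := by omega
    rw [hE, hE2, hE3, hE4, pow_add, pow_add]
    field_simp
    ring
  have hint : IntegrableOn (fun σ : ℝ =>
        (c2 * σ ^ 4 - c1 * σ ^ 2 - c0) * σ ^ (N - 1) / (σ ^ 2 + 1) ^ N) (Ioi (0:ℝ)) := by
    rw [heq]
    exact ((K2.1.const_mul c2).sub (K1.1.const_mul c1)).sub (K0.1.const_mul c0)
  have hI2 : IntegrableOn (fun σ : ℝ => c2 * (σ ^ (2*(s+4)+1) / (σ^2+1)^N)) (Ioi (0:ℝ)) :=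
    K2.1.const_mul c2
  have hI1 : IntegrableOn (fun σ : ℝ => c1 * (σ ^ (2*(s+3)+1) / (σ^2+1)^N)) (Ioi (0:ℝ)) :=
    K1.1.const_mul c1
  have hI0 : IntegrableOn (fun σ : ℝ => c0 * (σ ^ (2*(s+2)+1) / (σ^2+1)^N)) (Ioi (0:ℝ)) :=
    K0.1.const_mul c0
  have hI12 : IntegrableOn (fun σ : ℝ => c2 * (σ ^ (2*(s+4)+1) / (σ^2+1)^N)
      - c1 * (σ ^ (2*(s+3)+1) / (σ^2+1)^N)) (Ioi (0:ℝ)) := hI2.sub hI1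
  have g1 : (s.factorial : ℝ) ≠ 0 := by positivity
  have g2 : ((2*s+3).factorial : ℝ) ≠ 0 := by positivity
  have g3 : (2*(s:ℝ)+5) ≠ 0 := by positivity
  have g4 : (2*(s:ℝ)+4) ≠ 0 := by positivity
  have hs0 : (0:ℝ) ≤ s := Nat.cast_nonneg s
  have g5 : ((s:ℝ)+3) - 1 ≠ 0 := by intro h; nlinarith
  have g6 : ((s:ℝ)+3) - 2 ≠ 0 := by intro h; nlinarith
  have hval : ∫ σ in Ioi (0:ℝ),
        (c2 * σ ^ 4 - c1 * σ ^ 2 - c0) * σ ^ (N - 1) / (σ ^ 2 + 1) ^ N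
      = ((((s:ℝ)+3) ^ 2 - 2 * ((s:ℝ)+3) - 1) * ((s+2).factorial : ℝ) ^ 2 /
        ((((s:ℝ)+3) - 1) * (((s:ℝ)+3) - 2) * (((2*s+3).factorial : ℝ)))) := by
    rw [heq, integral_sub hI12 hI0, integral_sub hI2 hI1,
      integral_const_mul, integral_const_mul, integral_const_mul, K2.2, K1.2, K0.2]
    have i2 : N - (s+4) - 2 = s := by omega
    have i1 : N - (s+3) - 2 = s + 1 := by omega
    have i0 : N - (s+2) - 2 = s + 2 := by omega
    have iq : N - 1 = 2*s + 5 := by omega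
    rw [i2, i1, i0, iq]
    have f1 : ((s+1).factorial : ℝ) = (s+1) * (s.factorial : ℝ) := by
      rw [Nat.factorial_succ]; push_cast; ring
    have f2 : ((s+2).factorial : ℝ) = (s+2) * (s+1) * (s.factorial : ℝ) := by
      rw [Nat.factorial_succ]; push_cast [f1]; ring
    have f3 : ((s+3).factorial : ℝ) = (s+3) * (s+2) * (s+1) * (s.factorial : ℝ) := by
      rw [Nat.factorial_succ]; push_cast [f2]; ring
    have f4 : ((s+4).factorial : ℝ) = (s+4) * (s+3) * (s+2) * (s+1) * (s.factorial : ℝ) := by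
      rw [Nat.factorial_succ]; push_cast [f3]; ring
    have f5 : ((2*s+5).factorial : ℝ) = (2*(s:ℝ)+5) * (2*(s:ℝ)+4) * ((2*s+3).factorial : ℝ) := by
      rw [show 2*s+5 = (2*s+4)+1 by omega, Nat.factorial_succ,
        show 2*s+4 = (2*s+3)+1 by omega, Nat.factorial_succ]
      push_cast; ring
    have hden : (((s:ℝ)+3) - 1) * (((s:ℝ)+3) - 2) * ((2*s+3).factorial : ℝ) ≠ 0 :=
      mul_ne_zero (mul_ne_zero g5 g6) g2
    rw [f1, f2, f3, f4, f5, hc2, hc1, hc0, hN, eq_div_iff hden]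
    push_cast
    field_simp
    ring
  refine ⟨?_, ?_⟩
  · have htt := intervalIntegral_tendsto_integral_Ioi 0 hint tendsto_id
    rw [hval] at htt
    have hfin : ((((s:ℝ)+3) ^ 2 - 2 * ((s:ℝ)+3) - 1) * ((s+2).factorial : ℝ) ^ 2 /
        ((((s:ℝ)+3) - 1) * (((s:ℝ)+3) - 2) * (((2*s+3).factorial : ℝ))))
        = (((s+3:ℕ) : ℝ) ^ 2 - 2 * ((s+3:ℕ) : ℝ) - 1) * (((s+3-1).factorial : ℝ)) ^ 2 /
          ((((s+3:ℕ) : ℝ) - 1) * (((s+3:ℕ) : ℝ) - 2) * (((N-3).factorial : ℝ))) := by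
      rw [show s+3-1 = s+2 by omega, show N-3 = 2*s+3 by omega]
      push_cast
      ring
    rw [hfin] at htt
    apply htt.congr'
    filter_upwards [eventually_ge_atTop (0:ℝ)] with b hb
    simp only [id_eq]
    rw [intervalIntegral.integral_of_le hb, integral_Ioc_eq_integral_Ioo]
  · rw [show s+3-1 = s+2 by omega, show N-3 = 2*s+3 by omega]
    apply div_pos
    · apply mul_pos
      · push_cast
        nlinarith
      · positivity
    · apply mul_pos
      apply mul_pos
      · push_cast; nlinarith
      · push_cast; nlinarith
      · positivity
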